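/- Overlap structure of matching sets: Let M_u(v) = { w : {v,w} ∈ D_u } be the matching set of v, linearly ordered so that w' precedes w whenever {v,w} dominates {v,w'}. For any two vertices v, v' appearing in double-vertex dominators of u, the intersection M_u(v) ∩ M_u(v') is either a suffix of the ordered vector M_u(v) and simultaneously a prefix of the ordered vector M_u(v'), or a suffix of M_u(v') and simultaneously a prefix of M_u(v). -/

import Mathlib

/-- A nonempty directed path `p` from `a` to `b` in the graph with edge relation `E`. -/
def IsPath {V : Type*} (E : V → V → Prop) (p : List V) (a b : V) : Prop :=
  p ≠ [] ∧ p.head? = some a ∧ p.getLast? = some b ∧ p.Chain' E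

/-- `A` dominates `B` with respect to `root`: every path from a vertex of `B` to `root`
contains a vertex of `A`. -/
def Dominates {V : Type*} (E : V → V → Prop) (root : V) (A B : Set V) : Prop :=
  ∀ b ∈ B, ∀ p : List V, IsPath E p b root → ∃ a ∈ A, a ∈ p

/-- `A` is a dominator of `B`: it dominates `B` and no proper subset `A \ {v}` does. -/
def IsDominator {V : Type*} (E : V → V → Prop) (root : V) (A B : Set V) : Prop :=
  Dominates E root A B ∧ ∀ v ∈ A, ¬ Dominates E root (A \ {v}) B

/-- `{v, w}` is a double-vertex dominator of `u`. -/
def DoubleDom {V : Type*} (E : V → V → Prop) (root : V) (u v w : V) : Prop :=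
  v ≠ w ∧ Dominates E root {v, w} {u} ∧
    ¬ Dominates E root {v} {u} ∧ ¬ Dominates E root {w} {u}

/-- The edge relation `E` is acyclic. -/
def Acyclic {V : Type*} (E : V → V → Prop) : Prop :=
  ∀ a b, E a b → ¬ Relation.ReflTransGen E b a


namespace MVOverlap

open List Relation

variable {V : Type*} {E : V → V → Prop} {root u : V}

lemma split_path {p : List V} {a b c : V} (hp : IsPath E p a b) (hc : c ∈ p) :
    ∃ q r, p = q ++ c :: r ∧ IsPath E (q ++ [c]) a c ∧ IsPath E (c :: r) c b := by
  obtain ⟨hne, hh, hl, hch⟩ := hp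
  obtain ⟨q, r, rfl⟩ := List.append_of_mem hc
  refine ⟨q, r, rfl, ⟨by simp, ?_, by simp [List.getLast?_concat], ?_⟩,
    ⟨by simp, by simp, ?_, ?_⟩⟩
  · cases q with
    | nil => simpa using hh
    | cons x t => simpa [List.head?_append] using hh
  · exact hch.prefix ⟨r, by simp⟩
  · simpa [List.getLast?_append] using hl
  · exact hch.suffix ⟨q, rfl⟩

lemma splice_path {p q : List V} {a b c : V} (hp : IsPath E p a c) (hq : IsPath E q c b) :
    ∃ m, IsPath E m a b ∧ ∀ x ∈ m, x ∈ p ∨ x ∈ q := by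
  obtain ⟨hne, hh, hl, hch⟩ := hp
  obtain ⟨hne', hh', hl', hch'⟩ := hq
  obtain ⟨c', t, rfl⟩ : ∃ c' t, q = c' :: t := by
    cases q with
    | nil => simp at hne'
    | cons x t => exact ⟨x, t, rfl⟩
  obtain rfl : c' = c := by simpa using hh'
  have ht := List.isChain_cons.mp hch'
  refine ⟨p ++ t, ⟨by simp [hne], ?_, ?_, ?_⟩, ?_⟩
  · cases p with
    | nil => simp at hne
    | cons x s => simpa [List.head?_append] using hh
  · cases t with
    | nil =>
      obtain rfl : c' = b := by simpa using hl'
      simpa using hl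
    | cons y s =>
      rw [List.getLast?_append]
      have : (y :: s).getLast? = some b := by
        rw [← List.getLast?_cons_cons (a := c')]; exact hl'
      simp [this]
  · refine hch.append ht.2 ?_
    intro x hx y hy
    rw [hl] at hx
    obtain rfl : c' = x := by simpa using hx
    exact ht.1 y hy
  · intro x hx
    rcases List.mem_append.mp hx with h | h
    · exact Or.inl h
    · exact Or.inr (List.mem_cons_of_mem _ h)

lemma transGen_irrefl (hacyc : Acyclic E) {x : V} (h : Relation.TransGen E x x) : False := by
  cases h with
  | single h' => exact hacyc x x h' Relation.ReflTransGen.refl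
  | tail h₁ h₂ => exact hacyc _ _ h₂ h₁.to_reflTransGen

lemma transGen_asymm (hacyc : Acyclic E) {x y : V} (h₁ : Relation.TransGen E x y)
    (h₂ : Relation.TransGen E y x) : False :=
  transGen_irrefl hacyc (h₁.trans h₂)

/-- a two-element sublist of a path gives a nontrivial directed path -/
lemma transGen_of_sublist {p : List V} {a b x y : V} (hp : IsPath E p a b)
    (h : [x, y] <+ p) : Relation.TransGen E x y := by
  have hch : p.Chain' (Relation.TransGen E) :=
    List.IsChain.imp (fun a b h => Relation.TransGen.single h) hp.2.2.2
  exact (List.isChain_cons_cons.mp (hch.sublist h)).1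

lemma both_sublist_false {p : List V} {a b x y : V} (hacyc : Acyclic E) (hp : IsPath E p a b)
    (h₁ : [x, y] <+ p) (h₂ : [y, x] <+ p) : False :=
  transGen_asymm hacyc (transGen_of_sublist hp h₁) (transGen_of_sublist hp h₂)

lemma sublist_pair_of_mem {p : List V} {x y : V} (hx : x ∈ p) (hy : y ∈ p) (hne : x ≠ y) :
    [x, y] <+ p ∨ [y, x] <+ p := by
  induction p with
  | nil => simp at hx
  | cons a t ih =>
    rcases List.mem_cons.mp hx with rfl | hx'
    · have hy' : y ∈ t := (List.mem_cons.mp hy).resolve_left fun h => hne h.symm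
      exact Or.inl (List.cons_sublist_cons.mpr (List.singleton_sublist.mpr hy'))
    · rcases List.mem_cons.mp hy with rfl | hy'
      · exact Or.inr (List.cons_sublist_cons.mpr (List.singleton_sublist.mpr hx'))
      · rcases ih hx' hy' with h | h
        · exact Or.inl (h.cons a)
        · exact Or.inr (h.cons a)

/-- if d lies on the part of the path strictly after c -/
lemma sublist_of_split_right {p q r : List V} {c d : V} (hsplit : p = q ++ c :: r)
    (hd : d ∈ c :: r) (hne : d ≠ c) : [c, d] <+ p := by
  have hd' : d ∈ r := (List.mem_cons.mp hd).resolve_left hne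
  have : [c, d] <+ c :: r := List.cons_sublist_cons.mpr (List.singleton_sublist.mpr hd')
  rw [hsplit]; exact this.trans (List.suffix_append q (c :: r)).sublist

lemma sublist_of_split_left {p q r : List V} {c d : V} (hsplit : p = q ++ c :: r)
    (hd : d ∈ q ++ [c]) (hne : d ≠ c) : [d, c] <+ p := by
  have hd' : d ∈ q := by
    rcases List.mem_append.mp hd with h | h
    · exact h
    · simp at h; exact absurd h hne
  have h1 : [d, c] <+ q ++ [c] :=
    List.Sublist.append (List.singleton_sublist.mpr hd') (List.Sublist.refl [c])
  rw [hsplit]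
  exact h1.trans (List.Sublist.append_left (by simp) q)

lemma dom_hit' {c d z : V} {S : Set V} (h : Dominates E root {c, d} S) (hz : z ∈ S)
    {p : List V} (hp : IsPath E p z root) : c ∈ p ∨ d ∈ p := by
  obtain ⟨a, ha, hap⟩ := h z hz p hp
  simp only [Set.mem_insert_iff, Set.mem_singleton_iff] at ha
  rcases ha with rfl | rfl
  · exact Or.inl hap
  · exact Or.inr hap

lemma dom_hit {c d z : V} {p : List V} (h : Dominates E root {c, d} ({z} : Set V))
    (hp : IsPath E p z root) : c ∈ p ∨ d ∈ p :=
  dom_hit' h rfl hp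

lemma not_dom_exists {z : V} (h : ¬ Dominates E root ({z} : Set V) ({u} : Set V)) :
    ∃ p, IsPath E p u root ∧ z ∉ p := by
  unfold Dominates at h
  push_neg at h
  obtain ⟨b, hb, p, hp, hz⟩ := h
  obtain rfl : b = u := hb
  exact ⟨p, hp, fun hzp => hz z rfl hzp⟩

lemma key_a (hacyc : Acyclic E) {v v' w x : V}
    (hvv' : Relation.TransGen E v v')
    (hw : DoubleDom E root u v w) (hw' : DoubleDom E root u v' w)
    (hx : DoubleDom E root u v x)
    (hdom : Dominates E root {v, x} {v, w}) (hxw : x ≠ w)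
    {p : List V} (hp : IsPath E p u root) : v' ∈ p ∨ x ∈ p := by
  by_contra hcon
  push_neg at hcon
  obtain ⟨hv'p, hxp⟩ := hcon
  have hvne : v ≠ v' := fun h => transGen_irrefl hacyc (h ▸ hvv')
  -- w ∈ p
  have hwp : w ∈ p := (dom_hit hw'.2.1 hp).resolve_left hv'p
  -- v ∈ p
  have hvp : v ∈ p := (dom_hit hx.2.1 hp).resolve_right hxp
  -- [w, v] <+ p
  obtain ⟨q, r, hsp, hpre, hsuf⟩ := split_path hp hwp
  have hvsuf : v ∈ w :: r := by
    refine (dom_hit' hdom ?_ hsuf).resolve_right ?_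
    · exact Set.mem_insert_iff.mpr (Or.inr rfl)
    · intro hxs; exact hxp (by rw [hsp]; exact List.mem_append_right _ hxs)
  have hwv : [w, v] <+ p := sublist_of_split_right hsp hvsuf hw.1
  -- star: no path from v to root avoiding both w and v'
  have star : ∀ s', IsPath E s' v root → w ∉ s' → v' ∉ s' → False := by
    intro s' hs' hws' hv's'
    obtain ⟨r0, hr0, hwr0⟩ := not_dom_exists hw.2.2.2
    have hvr0 : v ∈ r0 := (dom_hit hw.2.1 hr0).resolve_right hwr0
    have hv'r0 : v' ∈ r0 := (dom_hit hw'.2.1 hr0).resolve_right hwr0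
    have hvv'r0 : [v, v'] <+ r0 := by
      rcases sublist_pair_of_mem hvr0 hv'r0 hvne with h | h
      · exact h
      · exact absurd (transGen_of_sublist hr0 h) (fun h' => transGen_asymm hacyc hvv' h')
    obtain ⟨q0, r0', hsp0, hpre0, _⟩ := split_path hr0 hvr0
    have hv'pre : v' ∉ q0 ++ [v] := by
      intro hmem
      exact both_sublist_false hacyc hr0 hvv'r0 (sublist_of_split_left hsp0 hmem (Ne.symm hvne))
    have hwpre : w ∉ q0 ++ [v] := by
      intro hmem
      apply hwr0
      rcases List.mem_append.mp hmem with h | h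
      · rw [hsp0]; exact List.mem_append_left _ h
      · simp at h; rw [hsp0, h]; exact List.mem_append_right _ (List.mem_cons_self)
    obtain ⟨m, hm, hmmem⟩ := splice_path hpre0 hs'
    rcases dom_hit hw'.2.1 hm with h | h
    · rcases hmmem v' h with h' | h'
      · exact hv'pre h'
      · exact hv's' h'
    · rcases hmmem w h with h' | h'
      · exact hwpre h'
      · exact hws' h'
  -- [v, w] <+ p
  obtain ⟨q2, r2, hsp2, _, hsuf2⟩ := split_path hp hvp
  have hwsuf2 : w ∈ v :: r2 := by
    by_contra hws
    exact star (v :: r2) hsuf2 hws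
      (fun hm => hv'p (by rw [hsp2]; exact List.mem_append_right _ hm))
  have hvw : [v, w] <+ p := sublist_of_split_right hsp2 hwsuf2 hw.1.symm
  exact both_sublist_false hacyc hp hwv hvw

lemma key_b (hacyc : Acyclic E) {v v' w x : V}
    (hvv' : Relation.TransGen E v v')
    (hw : DoubleDom E root u v w) (hw' : DoubleDom E root u v' w)
    (hx : DoubleDom E root u v' x)
    (hdom : Dominates E root {v', w} {v', x}) (hxw : x ≠ w)
    {p : List V} (hp : IsPath E p u root) : v ∈ p ∨ x ∈ p := by
  by_contra hcon
  push_neg at hcon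
  obtain ⟨hvp, hxp⟩ := hcon
  have hvne : v ≠ v' := fun h => transGen_irrefl hacyc (h ▸ hvv')
  have hwp : w ∈ p := (dom_hit hw.2.1 hp).resolve_left hvp
  have hv'p : v' ∈ p := (dom_hit hx.2.1 hp).resolve_right hxp
  -- (✦): no path from u to w avoiding both x and v'
  have dia : ∀ q, IsPath E q u w → x ∉ q → v' ∉ q → False := by
    intro q hq hxq hv'q
    obtain ⟨r, hr, hv'r⟩ := not_dom_exists hw'.2.2.1
    have hwr : w ∈ r := (dom_hit hw'.2.1 hr).resolve_left hv'r
    have hxr : x ∈ r := (dom_hit hx.2.1 hr).resolve_left hv'r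
    -- [x, w] <+ r
    obtain ⟨q1, r1, hsp1, _, hsuf1⟩ := split_path hr hxr
    have hwsuf1 : w ∈ x :: r1 := by
      refine (dom_hit' hdom ?_ hsuf1).resolve_left ?_
      · exact Set.mem_insert_iff.mpr (Or.inr rfl)
      · intro hm; exact hv'r (by rw [hsp1]; exact List.mem_append_right _ hm)
    have hxwr : [x, w] <+ r := sublist_of_split_right hsp1 hwsuf1 (Ne.symm hxw)
    -- suffix of r from w avoids x
    obtain ⟨q2, r2, hsp2, _, hsuf2⟩ := split_path hr hwr
    have hxsuf2 : x ∉ w :: r2 := by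
      intro hm
      exact both_sublist_false hacyc hr hxwr (sublist_of_split_right hsp2 hm hxw)
    have hv'suf2 : v' ∉ w :: r2 := fun hm =>
      hv'r (by rw [hsp2]; exact List.mem_append_right _ hm)
    obtain ⟨m, hm, hmmem⟩ := splice_path hq hsuf2
    rcases dom_hit hx.2.1 hm with h | h
    · rcases hmmem v' h with h' | h'
      · exact hv'q h'
      · exact hv'suf2 h'
    · rcases hmmem x h with h' | h'
      · exact hxq h'
      · exact hxsuf2 h'
  -- (★'): no path from u to v' avoiding both w and v
  have star : ∀ q, IsPath E q u v' → w ∉ q → v ∉ q → False := by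
    intro q hq hwq hvq
    obtain ⟨r, hr, hwr⟩ := not_dom_exists hw.2.2.2
    have hvr : v ∈ r := (dom_hit hw.2.1 hr).resolve_right hwr
    have hv'r : v' ∈ r := (dom_hit hw'.2.1 hr).resolve_right hwr
    have hvv'r : [v, v'] <+ r := by
      rcases sublist_pair_of_mem hvr hv'r hvne with h | h
      · exact h
      · exact absurd (transGen_of_sublist hr h) (fun h' => transGen_asymm hacyc hvv' h')
    obtain ⟨q3, r3, hsp3, _, hsuf3⟩ := split_path hr hv'r
    have hvsuf3 : v ∉ v' :: r3 := by
      intro hm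
      exact both_sublist_false hacyc hr hvv'r (sublist_of_split_right hsp3 hm hvne)
    have hwsuf3 : w ∉ v' :: r3 := fun hm =>
      hwr (by rw [hsp3]; exact List.mem_append_right _ hm)
    obtain ⟨m, hm, hmmem⟩ := splice_path hq hsuf3
    rcases dom_hit hw.2.1 hm with h | h
    · rcases hmmem v h with h' | h'
      · exact hvq h'
      · exact hvsuf3 h'
    · rcases hmmem w h with h' | h'
      · exact hwq h'
      · exact hwsuf3 h'
  -- [w, v'] <+ p
  obtain ⟨q4, r4, hsp4, hpre4, _⟩ := split_path hp hv'p
  have hwpre4 : w ∈ q4 ++ [v'] := by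
    by_contra hwm
    exact star (q4 ++ [v']) hpre4 hwm
      (fun hm => hvp (by
        rw [hsp4]
        rcases List.mem_append.mp hm with h | h
        · exact List.mem_append_left _ h
        · simp at h; rw [h]; exact List.mem_append_right _ (List.mem_cons_self)))
  have hwv' : [w, v'] <+ p := sublist_of_split_left hsp4 hwpre4 hw'.1.symm
  -- [v', w] <+ p
  obtain ⟨q5, r5, hsp5, hpre5, _⟩ := split_path hp hwp
  have hv'pre5 : v' ∈ q5 ++ [w] := by
    by_contra hv'm
    exact dia (q5 ++ [w]) hpre5
      (fun hm => hxp (by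
        rw [hsp5]
        rcases List.mem_append.mp hm with h | h
        · exact List.mem_append_left _ h
        · simp at h; rw [h]; exact List.mem_append_right _ (List.mem_cons_self)))
      hv'm
  have hv'w : [v', w] <+ p := sublist_of_split_left hsp5 hv'pre5 hw'.1
  exact both_sublist_false hacyc hp hwv' hv'w

lemma filter_suffix {p : V → Bool} : ∀ {L : List V},
    L.Pairwise (fun a b => p a → p b) → L.filter p <:+ L := by
  intro L
  induction L with
  | nil => simp
  | cons a t ih =>
    intro h
    rw [List.pairwise_cons] at h
    by_cases hpa : p a
    · have ht : t.filter p = t := List.filter_eq_self.mpr (fun b hb => h.1 b hb hpa)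
      rw [List.filter_cons_of_pos hpa, ht]
    · rw [List.filter_cons_of_neg hpa]
      exact (ih h.2).trans (List.suffix_cons a t)

lemma filter_prefix {p : V → Bool} : ∀ {L : List V},
    L.Pairwise (fun a b => p b → p a) → L.filter p <+: L := by
  intro L
  induction L with
  | nil => simp
  | cons a t ih =>
    intro h
    rw [List.pairwise_cons] at h
    by_cases hpa : p a
    · rw [List.filter_cons_of_pos hpa]
      obtain ⟨r, hr⟩ := ih h.2
      exact ⟨r, by simp [hr]⟩
    · rw [List.filter_cons_of_neg hpa]
      have : t.filter p = [] := List.filter_eq_nil_iff.mpr (fun b hb hpb => hpa (h.1 b hb hpb))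
      rw [this]
      exact List.nil_prefix

lemma eq_of_pairwise {R₁ R₂ : V → V → Prop} : ∀ (L₁ L₂ : List V), L₁.Nodup → L₂.Nodup →
    (∀ a, a ∈ L₁ ↔ a ∈ L₂) → L₁.Pairwise R₁ → L₂.Pairwise R₂ →
    (∀ a b, a ∈ L₁ → b ∈ L₁ → R₁ a b → R₂ b a → a = b) → L₁ = L₂ := by
  intro L₁
  induction L₁ with
  | nil =>
    intro L₂ _ _ hm _ _ _
    cases L₂ with
    | nil => rfl
    | cons b t => exact absurd ((hm b).mpr (List.mem_cons_self)) (by simp)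
  | cons a t ih =>
    intro L₂ h₁ h₂ hm hp₁ hp₂ hanti
    have haL₂ : a ∈ L₂ := (hm a).mp (List.mem_cons_self)
    cases L₂ with
    | nil => simp at haL₂
    | cons b t' =>
      rw [List.pairwise_cons] at hp₁ hp₂
      rw [List.nodup_cons] at h₁ h₂
      have hab : a = b := by
        by_contra hne
        have hbt : b ∈ t := by
          have := (hm b).mpr (List.mem_cons_self)
          exact (List.mem_cons.mp this).resolve_left (fun h => hne h.symm)
        have hat' : a ∈ t' := (List.mem_cons.mp haL₂).resolve_left hne
        exact hne (hanti a b (List.mem_cons_self) (List.mem_cons_of_mem _ hbt)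
          (hp₁.1 b hbt) (hp₂.1 a hat'))
      subst hab
      have hmt : ∀ y, y ∈ t ↔ y ∈ t' := by
        intro y
        constructor
        · intro hy
          have := (hm y).mp (List.mem_cons_of_mem _ hy)
          exact (List.mem_cons.mp this).resolve_left (fun h => h₁.1 (h ▸ hy))
        · intro hy
          have := (hm y).mpr (List.mem_cons_of_mem _ hy)
          exact (List.mem_cons.mp this).resolve_left (fun h => h₂.1 (h ▸ hy))
      have := ih t' h₁.2 h₂.2 hmt hp₁.2 hp₂.2
        (fun x y hx hy => hanti x y (List.mem_cons_of_mem _ hx) (List.mem_cons_of_mem _ hy))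
      rw [this]

lemma dom_anti (hacyc : Acyclic E) {v v' a b : V}
    (hav : DoubleDom E root u v a) (hav' : DoubleDom E root u v' a)
    (hbv : DoubleDom E root u v b) (hbv' : DoubleDom E root u v' b)
    (h1 : Dominates E root {v, b} {v, a}) (h2 : Dominates E root {v', a} {v', b}) : a = b := by
  by_contra hab
  obtain ⟨p, hp, hvp⟩ := not_dom_exists hav.2.2.1
  have hap : a ∈ p := (dom_hit hav.2.1 hp).resolve_left hvp
  have hbp : b ∈ p := (dom_hit hbv.2.1 hp).resolve_left hvp
  obtain ⟨q1, r1, hsp1, _, hsuf1⟩ := split_path hp hap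
  have hbsuf1 : b ∈ a :: r1 := by
    refine (dom_hit' h1 (Set.mem_insert_iff.mpr (Or.inr rfl)) hsuf1).resolve_left ?_
    intro hm; exact hvp (by rw [hsp1]; exact List.mem_append_right _ hm)
  have htab : Relation.TransGen E a b :=
    transGen_of_sublist hp (sublist_of_split_right hsp1 hbsuf1 (Ne.symm hab))
  obtain ⟨q, hq, hv'q⟩ := not_dom_exists hav'.2.2.1
  have haq : a ∈ q := (dom_hit hav'.2.1 hq).resolve_left hv'q
  have hbq : b ∈ q := (dom_hit hbv'.2.1 hq).resolve_left hv'q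
  obtain ⟨q2, r2, hsp2, _, hsuf2⟩ := split_path hq hbq
  have hasuf2 : a ∈ b :: r2 := by
    refine (dom_hit' h2 (Set.mem_insert_iff.mpr (Or.inr rfl)) hsuf2).resolve_left ?_
    intro hm; exact hv'q (by rw [hsp2]; exact List.mem_append_right _ hm)
  have htba : Relation.TransGen E b a :=
    transGen_of_sublist hq (sublist_of_split_right hsp2 hasuf2 hab)
  exact transGen_asymm hacyc htab htba

lemma overlap_main (hacyc : Acyclic E) {v v' : V} {L L' : List V}
    (hvv' : Relation.TransGen E v v')
    (hLnd : L.Nodup) (hL'nd : L'.Nodup)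
    (hLmem : ∀ w, w ∈ L ↔ DoubleDom E root u v w)
    (hL'mem : ∀ w, w ∈ L' ↔ DoubleDom E root u v' w)
    (hLord : L.Pairwise (fun a b => Dominates E root {v, b} {v, a}))
    (hL'ord : L'.Pairwise (fun a b => Dominates E root {v', b} {v', a})) :
    ∃ s : List V, (∀ w, w ∈ s ↔ w ∈ L ∧ w ∈ L') ∧ s <:+ L ∧ s <+: L' := by
  classical
  have hLord' : L.Pairwise (fun a b => a ≠ b ∧ Dominates E root {v, b} {v, a}) :=
    List.Pairwise.and hLnd hLord
  have hL'ord' : L'.Pairwise (fun a b => a ≠ b ∧ Dominates E root {v', b} {v', a}) :=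
    List.Pairwise.and hL'nd hL'ord
  set s := L.filter (fun x => decide (x ∈ L')) with hs
  set t := L'.filter (fun x => decide (x ∈ L)) with ht
  have mem_s : ∀ w, w ∈ s ↔ w ∈ L ∧ w ∈ L' := by
    intro w; simp [hs, List.mem_filter]
  have mem_t : ∀ w, w ∈ t ↔ w ∈ L' ∧ w ∈ L := by
    intro w; simp [ht, List.mem_filter]
  -- upward closure along L: key_a
  have hsuffix : s <:+ L := by
    apply filter_suffix
    refine List.Pairwise.imp_of_mem ?_ hLord'
    intro a b haL hbL hab hmem
    simp only [decide_eq_true_eq] at hmem ⊢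
    have haL' : a ∈ L' := hmem
    have hDa := (hLmem a).mp haL
    have hD'a := (hL'mem a).mp haL'
    have hDb := (hLmem b).mp hbL
    have hka : ∀ p, IsPath E p u root → v' ∈ p ∨ b ∈ p :=
      fun p hp => key_a hacyc hvv' hDa hD'a hDb hab.2 (Ne.symm hab.1) hp
    rw [hL'mem]
    refine ⟨?_, ?_, hD'a.2.2.1, hDb.2.2.2⟩
    · intro h
      obtain ⟨p, hp, hv'p⟩ := not_dom_exists hD'a.2.2.1
      rcases hka _ hp with h' | h'
      · exact hv'p h'
      · exact hv'p (h ▸ h')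
    · intro z hz p hp
      obtain rfl : z = u := hz
      rcases hka _ hp with h | h
      · exact ⟨v', Set.mem_insert_iff.mpr (Or.inl rfl), h⟩
      · exact ⟨b, Set.mem_insert_iff.mpr (Or.inr rfl), h⟩
  -- downward closure along L': key_b
  have hprefix : t <+: L' := by
    apply filter_prefix
    refine List.Pairwise.imp_of_mem ?_ hL'ord'
    intro a b haL' hbL' hab hmem
    simp only [decide_eq_true_eq] at hmem ⊢
    have hbL : b ∈ L := hmem
    have hDb := (hLmem b).mp hbL
    have hD'b := (hL'mem b).mp hbL'
    have hD'a := (hL'mem a).mp haL'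
    have hkb : ∀ p, IsPath E p u root → v ∈ p ∨ a ∈ p :=
      fun p hp => key_b hacyc hvv' hDb hD'b hD'a hab.2 hab.1 hp
    rw [hLmem]
    refine ⟨?_, ?_, hDb.2.2.1, hD'a.2.2.2⟩
    · intro h
      obtain ⟨p, hp, hvp⟩ := not_dom_exists hDb.2.2.1
      rcases hkb _ hp with h' | h'
      · exact hvp h'
      · exact hvp (h ▸ h')
    · intro z hz p hp
      obtain rfl : z = u := hz
      rcases hkb _ hp with h | h
      · exact ⟨v, Set.mem_insert_iff.mpr (Or.inl rfl), h⟩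
      · exact ⟨a, Set.mem_insert_iff.mpr (Or.inr rfl), h⟩
  -- s = t
  have hst : s = t := by
    apply eq_of_pairwise s t (hLnd.filter _) (hL'nd.filter _)
      (fun a => by rw [mem_s, mem_t, and_comm])
      (List.Pairwise.sublist (List.filter_sublist (l := L)) hLord')
      (List.Pairwise.sublist (List.filter_sublist (l := L')) hL'ord')
    intro a b ha hb h1 h2
    obtain ⟨haL, haL'⟩ := (mem_s a).mp ha
    obtain ⟨hbL, hbL'⟩ := (mem_s b).mp hb
    exact dom_anti hacyc ((hLmem a).mp haL) ((hL'mem a).mp haL')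
      ((hLmem b).mp hbL) ((hL'mem b).mp hbL') h1.2 h2.2
  exact ⟨s, mem_s, hsuffix, hst ▸ hprefix⟩

end MVOverlap

open MVOverlap in
theorem matching_vectors_overlap {V : Type*} [Fintype V] (E : V → V → Prop) (root : V)
    (hacyc : Acyclic E) (u v v' : V) (L L' : List V)
    (hLnd : L.Nodup) (hL'nd : L'.Nodup)
    (hLmem : ∀ w, w ∈ L ↔ DoubleDom E root u v w)
    (hL'mem : ∀ w, w ∈ L' ↔ DoubleDom E root u v' w)
    (hLord : L.Pairwise (fun a b => Dominates E root {v, b} {v, a}))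
    (hL'ord : L'.Pairwise (fun a b => Dominates E root {v', b} {v', a})) :
    ∃ s : List V, (∀ w, w ∈ s ↔ w ∈ L ∧ w ∈ L') ∧
      ((s <:+ L ∧ s <+: L') ∨ (s <:+ L' ∧ s <+: L)) := by
  classical
  by_cases hI : ∃ w0, w0 ∈ L ∧ w0 ∈ L'
  · obtain ⟨w0, hw0L, hw0L'⟩ := hI
    by_cases hvv : v = v'
    · subst hvv
      have hEq : L = L' := eq_of_pairwise L L' hLnd hL'nd
        (fun a => (hLmem a).trans (hL'mem a).symm)
        (List.Pairwise.and hLnd hLord) (List.Pairwise.and hL'nd hL'ord)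
        (fun a b haL hbL h1 h2 => dom_anti hacyc ((hLmem a).mp haL)
          ((hLmem a).mp haL) ((hLmem b).mp hbL) ((hLmem b).mp hbL) h1.2 h2.2)
      exact ⟨L, fun w => ⟨fun h => ⟨h, hEq ▸ h⟩, fun h => h.1⟩,
        Or.inl ⟨List.suffix_refl L, hEq ▸ List.prefix_refl L⟩⟩
    · have hDw0 := (hLmem w0).mp hw0L
      have hD'w0 := (hL'mem w0).mp hw0L'
      obtain ⟨r0, hr0, hw0r0⟩ := not_dom_exists hDw0.2.2.2
      have hvr0 : v ∈ r0 := (dom_hit hDw0.2.1 hr0).resolve_right hw0r0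
      have hv'r0 : v' ∈ r0 := (dom_hit hD'w0.2.1 hr0).resolve_right hw0r0
      rcases sublist_pair_of_mem hvr0 hv'r0 hvv with h | h
      · obtain ⟨s, hmem, hsuf, hpre⟩ := overlap_main hacyc (transGen_of_sublist hr0 h)
          hLnd hL'nd hLmem hL'mem hLord hL'ord
        exact ⟨s, hmem, Or.inl ⟨hsuf, hpre⟩⟩
      · obtain ⟨s, hmem, hsuf, hpre⟩ := overlap_main hacyc (transGen_of_sublist hr0 h)
          hL'nd hLnd hL'mem hLmem hL'ord hLord
        exact ⟨s, fun w => (hmem w).trans and_comm, Or.inr ⟨hsuf, hpre⟩⟩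
  · push_neg at hI
    exact ⟨[], fun w => by simp only [List.not_mem_nil, false_iff]; exact fun h => hI w h.1 h.2,
      Or.inl ⟨List.nil_suffix, List.nil_prefix⟩⟩
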